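/- Let G = ⟨X | R⟩ be a group presentation such that for every relator r ∈ R the total exponent exp_X(r) is congruent to 0 modulo M. Then the oriented Cayley graph Cay(G, X) is isomorphic, as a marked labeled oriented graph, to any connected component of Cay(G, X) ⊗ C_M. -/

import Mathlib

/-- An oriented (multi)graph: vertices, edges, initial and terminal maps. -/
structure OGraph where
  V : Type
  E : Type
  ι : E → V
  τ : E → V

namespace OGraph

/-- Tensor product of oriented graphs. -/
def tensor (G H : OGraph) : OGraph where
  V := G.V × H.V
  E := G.E × H.E
  ι e := (G.ι e.1, H.ι e.2)
  τ e := (G.τ e.1, H.τ e.2)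

/-- Isomorphism of oriented graphs. -/
structure Iso (G H : OGraph) where
  fV : G.V ≃ H.V
  fE : G.E ≃ H.E
  hι : ∀ e, H.ι (fE e) = fV (G.ι e)
  hτ : ∀ e, H.τ (fE e) = fV (G.τ e)

/-- Weak adjacency. -/
def Adj (G : OGraph) (u v : G.V) : Prop :=
  (∃ e, G.ι e = u ∧ G.τ e = v) ∨ (∃ e, G.ι e = v ∧ G.τ e = u)

/-- Weak reachability. -/
def Reach (G : OGraph) : G.V → G.V → Prop := Relation.ReflTransGen G.Adj

/-- The connected component of a vertex. -/
def component (G : OGraph) (v : G.V) : OGraph where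
  V := {w // G.Reach v w}
  E := {e // G.Reach v (G.ι e)}
  ι e := ⟨G.ι e.1, e.2⟩
  τ e := ⟨G.τ e.1, e.2.tail (Or.inl ⟨e.1, rfl, rfl⟩)⟩

end OGraph

/-- The oriented cycle of length `M` (`M = 0` gives the oriented line, i.e. `M = ∞`). -/
@[reducible] def cycle (M : ℕ) : OGraph where
  V := ZMod M
  E := ZMod M
  ι i := i
  τ i := i + 1

/-- An oriented graph whose edges carry labels in `X`. -/
structure LGraph (X : Type) extends OGraph where
  lab : E → X

/-- Strong (label-preserving) isomorphism of labeled oriented graphs. -/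
structure LIso {X : Type} (G H : LGraph X) extends OGraph.Iso G.toOGraph H.toOGraph where
  hlab : ∀ e, H.lab (fE e) = G.lab e

/-- Tensor product of a labeled graph with the cycle `C_M`, the labels being inherited
from the first factor. -/
def LGraph.tensorC {X : Type} (G : LGraph X) (M : ℕ) : LGraph X where
  toOGraph := G.toOGraph.tensor (cycle M)
  lab e := G.lab e.1

/-- The connected component of a vertex of a labeled graph. -/
def LGraph.component {X : Type} (G : LGraph X) (v : G.V) : LGraph X where
  toOGraph := G.toOGraph.component v
  lab e := G.lab e.1

/-- The labeled oriented Cayley graph of a group `G` with generators indexed by `f : X → G`: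
an edge labeled `x` from `g` to `g * f x`. -/
def cayley (G : Type) [Group G] {X : Type} (f : X → G) : LGraph X where
  V := G
  E := G × X
  ι e := e.1
  τ e := e.1 * f e.2
  lab e := e.2

/-- The labeled oriented Schreier graph of `G` with respect to a subgroup `H` and
generators `f : X → G`: vertices are right cosets `Hg`, with an edge labeled `x`
from `Hg` to `Hg·(f x)`. -/
def schreier (G : Type) [Group G] (H : Subgroup G) {X : Type} (f : X → G) : LGraph X where
  V := Quotient (QuotientGroup.rightRel H)
  E := Quotient (QuotientGroup.rightRel H) × X
  ι e := e.1
  τ e := Quotient.map (fun g => g * f e.2)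
    (fun a b h => by
      have h' := QuotientGroup.rightRel_apply.mp h
      exact QuotientGroup.rightRel_apply.mpr (by simpa [mul_assoc] using h')) e.1
  lab e := e.2

namespace CayleyTensorAux

open Relation

variable {X : Type} {R : Set (FreeGroup X)} {M : ℕ}

section
variable (h : ∀ r ∈ R, FreeGroup.lift (fun _ : X => Multiplicative.ofAdd (1 : ZMod M)) r = 1)

/-- The "total exponent mod M" homomorphism, as a function to `ZMod M`. -/
noncomputable def psi (g : PresentedGroup R) : ZMod M :=
  Multiplicative.toAdd (PresentedGroup.toGroup h g)

lemma psi_mul (a b : PresentedGroup R) : psi h (a * b) = psi h a + psi h b := by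
  simp [psi]

lemma psi_one : psi h (1 : PresentedGroup R) = 0 := by simp [psi]

lemma psi_inv (a : PresentedGroup R) : psi h a⁻¹ = - psi h a := by simp [psi]

lemma psi_of (x : X) : psi h (PresentedGroup.of (rels := R) x) = 1 := by
  simp [psi]

lemma reach_symm {G : OGraph} {u v : G.V} (hr : G.Reach u v) : G.Reach v u :=
  (@Relation.ReflTransGen.symmetric _ _ ⟨fun _ _ hadj => hadj.symm⟩).symm _ _ hr

lemma edge_inv (e : (PresentedGroup R × X) × ZMod M) :
    ((((cayley (PresentedGroup R) (PresentedGroup.of (rels := R))).tensorC M)).τ e).2 -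
      psi h ((((cayley (PresentedGroup R) (PresentedGroup.of (rels := R))).tensorC M)).τ e).1 =
    ((((cayley (PresentedGroup R) (PresentedGroup.of (rels := R))).tensorC M)).ι e).2 -
      psi h ((((cayley (PresentedGroup R) (PresentedGroup.of (rels := R))).tensorC M)).ι e).1 := by
  show (e.2 + 1) - psi h (e.1.1 * PresentedGroup.of (rels := R) e.1.2) = e.2 - psi h e.1.1
  rw [psi_mul, psi_of]
  ring

lemma adj_inv {u v : PresentedGroup R × ZMod M}
    (hadj : (((cayley (PresentedGroup R) (PresentedGroup.of (rels := R))).tensorC M)).Adj u v) :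
    v.2 - psi h v.1 = u.2 - psi h u.1 := by
  rcases hadj with ⟨e, he1, he2⟩ | ⟨e, he1, he2⟩
  · subst he1; subst he2; exact edge_inv h e
  · subst he1; subst he2; exact (edge_inv h e).symm

lemma reach_step (g : PresentedGroup R) (z : ZMod M) (x : X) :
    (((cayley (PresentedGroup R) (PresentedGroup.of (rels := R))).tensorC M)).Reach (g, z)
      (g * PresentedGroup.of (rels := R) x, z + 1) :=
  Relation.ReflTransGen.single (Or.inl ⟨((g, x), z), rfl, rfl⟩)

/-- The set of `a` such that one can always travel from `(g,z)` to `(g*a, z + psi a)`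
is a subgroup. -/
noncomputable def T : Subgroup (PresentedGroup R) where
  carrier := {a | ∀ (g : PresentedGroup R) (z : ZMod M),
    (((cayley (PresentedGroup R) (PresentedGroup.of (rels := R))).tensorC M)).Reach (g, z)
      (g * a, z + psi h a)}
  one_mem' := by
    intro g z
    have e1 : g * (1 : PresentedGroup R) = g := mul_one g
    have e2 : z + psi h 1 = z := by rw [psi_one, add_zero]
    rw [e1, e2]
    exact Relation.ReflTransGen.refl
  mul_mem' := by
    intro a b ha hb g z
    have h1 := ha g z
    have h2 := hb (g * a) (z + psi h a)
    have e1 : g * a * b = g * (a * b) := mul_assoc g a b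
    have e2 : z + psi h a + psi h b = z + psi h (a * b) := by rw [psi_mul, add_assoc]
    rw [e1, e2] at h2
    exact h1.trans h2
  inv_mem' := by
    intro a ha g z
    have h1 := ha (g * a⁻¹) (z + psi h a⁻¹)
    have e1 : g * a⁻¹ * a = g := inv_mul_cancel_right g a
    have e2 : z + psi h a⁻¹ + psi h a = z := by rw [psi_inv]; ring
    rw [e1, e2] at h1
    exact reach_symm h1

lemma reach_all (a g : PresentedGroup R) (z : ZMod M) :
    (((cayley (PresentedGroup R) (PresentedGroup.of (rels := R))).tensorC M)).Reach (g, z)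
      (g * a, z + psi h a) := by
  refine PresentedGroup.generated_by R (T h) (fun x => ?_) a g z
  intro g z
  have := reach_step (R := R) (M := M) g z x
  rwa [← psi_of h x] at this

lemma reach_iff (p w : PresentedGroup R × ZMod M) :
    (((cayley (PresentedGroup R) (PresentedGroup.of (rels := R))).tensorC M)).Reach p w ↔
      w.2 - psi h w.1 = p.2 - psi h p.1 := by
  constructor
  · intro hr
    induction hr with
    | refl => rfl
    | tail _ hadj ih => rw [adj_inv h hadj, ih]
  · intro hw
    have hr := reach_all h (p.1⁻¹ * w.1) p.1 p.2
    have e1 : p.1 * (p.1⁻¹ * w.1) = w.1 := by group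
    have e2 : p.2 + psi h (p.1⁻¹ * w.1) = w.2 := by
      rw [psi_mul, psi_inv]
      linear_combination -hw
    rw [e1, e2] at hr
    exact hr

end
end CayleyTensorAux


/-- Let `G = ⟨X | R⟩` be a presentation in which every relator has
total exponent ≡ 0 (mod M) (expressed by saying that the lift of `x ↦ 1 ∈ ℤ/Mℤ` kills
every relator). Then the oriented Cayley graph `Cay(G, X)` is isomorphic, as a marked
labeled oriented graph, to any connected component of `Cay(G, X) ⊗ C_M` (marked at the
group element underlying the chosen basepoint). -/
theorem cayley_iso_component_tensor_cycle {X : Type} (R : Set (FreeGroup X)) (M : ℕ)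
    (h : ∀ r ∈ R, FreeGroup.lift (fun _ : X => Multiplicative.ofAdd (1 : ZMod M)) r = 1)
    (p : ((cayley (PresentedGroup R) (PresentedGroup.of (rels := R))).tensorC M).V) :
    ∃ i : LIso (cayley (PresentedGroup R) (PresentedGroup.of (rels := R)))
        (((cayley (PresentedGroup R) (PresentedGroup.of (rels := R))).tensorC M).component p),
      i.fV p.1 = ⟨p, Relation.ReflTransGen.refl⟩ := by
    classical
  open CayleyTensorAux in
  set c : ZMod M := p.2 - psi h p.1 with hc
  have key : ∀ w, (((cayley (PresentedGroup R) (PresentedGroup.of (rels := R))).tensorC M)).Reach p w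
      ↔ w.2 - psi h w.1 = c := fun w => reach_iff h p w
  refine ⟨{
    fV := {
      toFun := fun g => ⟨(g, psi h g + c), (key _).mpr (by show psi h g + c - psi h g = c; ring)⟩
      invFun := fun w => w.1.1
      left_inv := fun g => rfl
      right_inv := fun w => by
        obtain ⟨⟨g, z⟩, hr⟩ := w
        have hz : z - psi h g = c := (key _).mp hr
        refine Subtype.ext (Prod.ext rfl ?_)
        show psi h g + c = z
        linear_combination -hz }
    fE := {
      toFun := fun e => ⟨((e.1, e.2), psi h e.1 + c),
        (key _).mpr (by show psi h e.1 + c - psi h e.1 = c; ring)⟩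
      invFun := fun e => e.1.1
      left_inv := fun e => rfl
      right_inv := fun e => by
        obtain ⟨⟨⟨g, x⟩, z⟩, hr⟩ := e
        have hz : z - psi h g = c := (key _).mp hr
        refine Subtype.ext (Prod.ext rfl ?_)
        show psi h g + c = z
        linear_combination -hz }
    hι := fun e => rfl
    hτ := fun e => by
      refine Subtype.ext (Prod.ext rfl ?_)
      show psi h e.1 + c + 1 = psi h (e.1 * PresentedGroup.of e.2) + c
      rw [psi_mul, psi_of]
      ring
    hlab := fun e => rfl }, ?_⟩
  refine Subtype.ext (Prod.ext rfl ?_)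
  show psi h p.1 + c = p.2
  rw [hc]
  ring
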